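/- Let ω_m (m ∈ ℕ) and ω be elements of (0,1)^ℕ such that ω_m → ω in the product topology (i.e., the n-th coordinate of ω_m converges to the n-th coordinate of ω for every n). For each m let X(ω_m) = Ĉ \ E(ω_m) and X(ω) = Ĉ \ E(ω), where Ĉ is the Riemann sphere (the one-point compactification of ℂ) and E(·) ⊂ [0,1] ⊂ ℝ ⊂ ℂ is the generalized Cantor set. Define the Carathéodory kernel N({X(ω_m)}) as the set of points z ∈ Ĉ for which there exist a neighborhood U of z and M ∈ ℕ such that U ⊆ X(ω_m) for all m > M. Then N({X(ω_m)}) = X(ω). -/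

import Mathlib

open Filter Topology

/-- `L_n = 2^{-n} ∏_{i=1}^n (1 - q_i)`. -/
noncomputable def cantorL (q : ℕ → ℝ) (n : ℕ) : ℝ :=
  (∏ i ∈ Finset.Icc 1 n, (1 - q i)) / 2 ^ n

/-- `a_n(ε) = ∑_{k=1}^n ε_k (L_{k-1} - L_k)`. -/
noncomputable def cantorA (q : ℕ → ℝ) (n : ℕ) (ε : ℕ → Bool) : ℝ :=
  ∑ k ∈ Finset.Icc 1 n, if ε k then cantorL q (k - 1) - cantorL q k else 0

/-- The `n`-th stage `E_n(ω)`. -/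
noncomputable def cantorStage (q : ℕ → ℝ) (n : ℕ) : Set ℝ :=
  ⋃ ε : ℕ → Bool, Set.Icc (cantorA q n ε) (cantorA q n ε + cantorL q n)

/-- The generalized Cantor set `E(ω) = ⋂_{n ≥ 1} E_n(ω)`. -/
noncomputable def genCantorSet (q : ℕ → ℝ) : Set ℝ :=
  ⋂ n ∈ Set.Ici 1, cantorStage q n

/-- `E(ω)` regarded as a subset of the Riemann sphere `Ĉ = OnePoint ℂ`
(via `ℝ ⊂ ℂ ⊂ Ĉ`). -/
noncomputable def genCantorSetSphere (q : ℕ → ℝ) : Set (OnePoint ℂ) :=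
  (fun x : ℝ => ((x : ℂ) : OnePoint ℂ)) '' genCantorSet q

/-- The complementary domain `X(ω) = Ĉ \ E(ω)`. -/
noncomputable def cantorComplement (q : ℕ → ℝ) : Set (OnePoint ℂ) :=
  (genCantorSetSphere q)ᶜ

section Aux
variable {q : ℕ → ℝ}

lemma cantorL_zero (q : ℕ → ℝ) : cantorL q 0 = 1 := by simp [cantorL]

lemma cantorL_succ (q : ℕ → ℝ) (n : ℕ) :
    cantorL q (n+1) = cantorL q n * (1 - q (n+1)) / 2 := by
  rw [cantorL, cantorL, Finset.prod_Icc_succ_top (Nat.le_add_left 1 n)]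
  ring

variable (hq : ∀ n, 1 ≤ n → q n ∈ Set.Ioo (0:ℝ) 1)
include hq

lemma cantorL_pos (n : ℕ) : 0 < cantorL q n := by
  apply div_pos
  · apply Finset.prod_pos
    intro i hi
    have := hq i (Finset.mem_Icc.mp hi).1
    linarith [this.2]
  · positivity

lemma cantorL_le (n : ℕ) : cantorL q n ≤ (1/2:ℝ)^n := by
  have h1 : (∏ i ∈ Finset.Icc 1 n, (1 - q i)) ≤ 1 := by
    apply Finset.prod_le_one
    · intro i hi; have := hq i (Finset.mem_Icc.mp hi).1; linarith [this.2]
    · intro i hi; have := hq i (Finset.mem_Icc.mp hi).1; linarith [this.1]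
  calc cantorL q n ≤ 1 / 2^n := by
        rw [cantorL, div_le_div_iff_of_pos_right (by positivity)]; exact h1
    _ = (1/2:ℝ)^n := by rw [div_pow, one_pow]

lemma cantorL_succ_lt (n : ℕ) : cantorL q (n+1) < cantorL q n := by
  rw [cantorL_succ]
  have hL := cantorL_pos hq n
  have hqn := hq (n+1) (by omega)
  obtain ⟨h1, h2⟩ := hqn
  nlinarith

lemma cantorL_sub_pos {k : ℕ} (hk : 1 ≤ k) : 0 < cantorL q (k-1) - cantorL q k := by
  obtain ⟨j, rfl⟩ : ∃ j, k = j + 1 := ⟨k - 1, by omega⟩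
  simp only [Nat.add_sub_cancel]
  linarith [cantorL_succ_lt hq j]

end Aux

lemma telescope_Ioc (f : ℕ → ℝ) : ∀ {m n : ℕ}, m ≤ n →
    ∑ k ∈ Finset.Ioc m n, (f (k-1) - f k) = f m - f n := by
  intro m n h
  induction n with
  | zero => interval_cases m; simp
  | succ n ih =>
    rcases Nat.lt_or_ge m (n+1) with h' | h'
    · have hmn : m ≤ n := by omega
      rw [Finset.sum_Ioc_succ_top hmn, ih hmn]
      simp only [Nat.add_sub_cancel]
      ring
    · have : m = n + 1 := by omega
      subst this; simp

lemma cantorA_congr (q : ℕ → ℝ) {n : ℕ} {ε ε' : ℕ → Bool}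
    (h : ∀ k ∈ Finset.Icc 1 n, ε k = ε' k) : cantorA q n ε = cantorA q n ε' := by
  unfold cantorA
  exact Finset.sum_congr rfl fun k hk => by rw [h k hk]

lemma Icc_one_eq_Ioc (n : ℕ) : Finset.Icc 1 n = Finset.Ioc 0 n := by
  ext k; simp [Nat.lt_iff_add_one_le]

lemma cantorA_split (q : ℕ → ℝ) (ε : ℕ → Bool) {m n : ℕ} (hmn : m ≤ n) :
    cantorA q n ε = cantorA q m ε
      + ∑ k ∈ Finset.Ioc m n, (if ε k then cantorL q (k-1) - cantorL q k else 0) := by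
  unfold cantorA
  rw [Icc_one_eq_Ioc, Icc_one_eq_Ioc,
    ← Finset.sum_Ioc_consecutive _ (Nat.zero_le m) hmn]

section Aux2
variable {q : ℕ → ℝ} (hq : ∀ n, 1 ≤ n → q n ∈ Set.Ioo (0:ℝ) 1)
include hq

lemma cantorA_tail_nonneg (ε : ℕ → Bool) {m n : ℕ} (hmn : m ≤ n) :
    cantorA q m ε ≤ cantorA q n ε := by
  rw [cantorA_split q ε hmn]
  have : (0:ℝ) ≤ ∑ k ∈ Finset.Ioc m n, (if ε k then cantorL q (k-1) - cantorL q k else 0) := by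
    apply Finset.sum_nonneg
    intro k hk
    have hk1 : 1 ≤ k := by have := (Finset.mem_Ioc.mp hk).1; omega
    split
    · exact le_of_lt (cantorL_sub_pos hq hk1)
    · exact le_refl 0
  linarith

lemma cantorA_tail_le (ε : ℕ → Bool) {m n : ℕ} (hmn : m ≤ n) :
    cantorA q n ε ≤ cantorA q m ε + (cantorL q m - cantorL q n) := by
  rw [cantorA_split q ε hmn]
  have h1 : ∑ k ∈ Finset.Ioc m n, (if ε k then cantorL q (k-1) - cantorL q k else 0)
      ≤ ∑ k ∈ Finset.Ioc m n, (cantorL q (k-1) - cantorL q k) := by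
    apply Finset.sum_le_sum
    intro k hk
    have hk1 : 1 ≤ k := by have := (Finset.mem_Ioc.mp hk).1; omega
    split
    · exact le_refl _
    · exact le_of_lt (cantorL_sub_pos hq hk1)
  rw [telescope_Ioc _ hmn] at h1
  linarith

lemma cantorA_nonneg (ε : ℕ → Bool) (n : ℕ) : 0 ≤ cantorA q n ε := by
  have := cantorA_tail_nonneg hq ε (Nat.zero_le n)
  simpa [cantorA] using this

lemma cantorA_add_L_le_one (ε : ℕ → Bool) (n : ℕ) : cantorA q n ε + cantorL q n ≤ 1 := by
  have := cantorA_tail_le hq ε (Nat.zero_le n)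
  simp only [cantorA, cantorL_zero, Finset.Icc_eq_empty_of_lt Nat.zero_lt_one,
    Finset.sum_empty, zero_add] at this
  simp only [cantorA]
  linarith

omit hq in
lemma cantorA_eq_of_tail_false (ε : ℕ → Bool) {n m : ℕ} (hnm : n ≤ m)
    (hε : ∀ k, n < k → ε k = false) : cantorA q m ε = cantorA q n ε := by
  rw [cantorA_split q ε hnm]
  have : ∑ k ∈ Finset.Ioc n m, (if ε k then cantorL q (k-1) - cantorL q k else 0) = 0 := by
    apply Finset.sum_eq_zero
    intro k hk
    rw [hε k (Finset.mem_Ioc.mp hk).1]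
    simp
  rw [this, add_zero]

lemma cantorA_mem_genCantorSet (ε : ℕ → Bool) (n : ℕ) :
    cantorA q n ε ∈ genCantorSet q := by
  set ε' : ℕ → Bool := fun k => if k ≤ n then ε k else false with hε'
  have hA : cantorA q n ε = cantorA q n ε' := by
    apply cantorA_congr
    intro k hk
    simp [hε', (Finset.mem_Icc.mp hk).2]
  rw [genCantorSet]
  refine Set.mem_iInter₂.mpr fun m _ => Set.mem_iUnion.mpr ⟨ε', ?_⟩
  have htail : ∀ k, n < k → ε' k = false := by
    intro k hk; simp [hε', Nat.not_le.mpr hk]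
  rcases le_total m n with hmn | hnm
  · constructor
    · rw [hA]; exact cantorA_tail_nonneg hq ε' hmn
    · rw [hA]
      have := cantorA_tail_le hq ε' hmn
      have hLn := cantorL_pos hq n
      linarith
  · have heq : cantorA q m ε' = cantorA q n ε' := cantorA_eq_of_tail_false ε' hnm htail
    constructor
    · rw [hA, heq]
    · rw [hA, heq]
      have := cantorL_pos hq m
      linarith

lemma genCantorSet_subset_Icc : genCantorSet q ⊆ Set.Icc 0 1 := by
  intro x hx
  have h1 : x ∈ cantorStage q 1 := Set.mem_iInter₂.mp hx 1 (Set.mem_Ici.mpr (le_refl 1))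
  obtain ⟨ε, hε⟩ := Set.mem_iUnion.mp h1
  obtain ⟨hl, hr⟩ := hε
  have h2 := cantorA_nonneg hq ε 1
  have h3 := cantorA_add_L_le_one hq ε 1
  exact ⟨le_trans h2 hl, le_trans hr h3⟩

end Aux2

section Tendsto
variable {ω : ℕ → ℕ → ℝ} {ωlim : ℕ → ℝ}
variable (hconv : ∀ n, 1 ≤ n → Tendsto (fun m => ω m n) atTop (nhds (ωlim n)))
include hconv

lemma tendsto_cantorL (n : ℕ) :
    Tendsto (fun m => cantorL (ω m) n) atTop (nhds (cantorL ωlim n)) := by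
  unfold cantorL
  apply Tendsto.div_const
  apply tendsto_finset_prod
  intro i hi
  exact tendsto_const_nhds.sub (hconv i (Finset.mem_Icc.mp hi).1)

lemma tendsto_cantorA (n : ℕ) (ε : ℕ → Bool) :
    Tendsto (fun m => cantorA (ω m) n ε) atTop (nhds (cantorA ωlim n ε)) := by
  unfold cantorA
  apply tendsto_finset_sum
  intro k _
  by_cases h : ε k
  · simp only [h, if_true]
    exact (tendsto_cantorL hconv (k-1)).sub (tendsto_cantorL hconv k)
  · simp only [h, if_false]
    exact tendsto_const_nhds

end Tendsto

lemma sphere_map_continuous : Continuous (fun x : ℝ => ((x:ℂ) : OnePoint ℂ)) :=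
  OnePoint.continuous_coe.comp Complex.continuous_ofReal

lemma sphere_map_injective : Function.Injective (fun x : ℝ => ((x:ℂ) : OnePoint ℂ)) :=
  OnePoint.coe_injective.comp Complex.ofReal_injective

lemma real_dist_complex (x y : ℝ) : dist (x:ℂ) (y:ℂ) = dist x y := by
  simp [Complex.dist_eq, ← Complex.ofReal_sub, Complex.norm_real, Real.dist_eq]

/-- if `ω_m → ω` coordinatewise in `(0,1)^ℕ`, then the Carathéodory kernel of
the domains `X(ω_m) = Ĉ \ E(ω_m)` — the set of points `z` having a neighborhood `U` with
`U ⊆ X(ω_m)` for all sufficiently large `m` — equals `X(ω)`. -/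
theorem caratheodory_kernel_of_convergent (ω : ℕ → ℕ → ℝ) (ωlim : ℕ → ℝ)
    (hω : ∀ m n, 1 ≤ n → ω m n ∈ Set.Ioo (0 : ℝ) 1)
    (hωlim : ∀ n, 1 ≤ n → ωlim n ∈ Set.Ioo (0 : ℝ) 1)
    (hconv : ∀ n, 1 ≤ n → Tendsto (fun m => ω m n) atTop (nhds (ωlim n))) :
    {z : OnePoint ℂ | ∃ U ∈ nhds z, ∃ M : ℕ, ∀ m > M, U ⊆ cantorComplement (ω m)}
      = cantorComplement ωlim := by
  set g : ℝ → OnePoint ℂ := fun x : ℝ => ((x:ℂ) : OnePoint ℂ) with hg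
  ext z
  simp only [Set.mem_setOf_eq, cantorComplement, Set.mem_compl_iff]
  constructor
  · rintro ⟨U, hU, M, hM⟩ hz
    obtain ⟨x, hxE, rfl⟩ := hz
    have hUx : g ⁻¹' U ∈ nhds x := sphere_map_continuous.continuousAt.preimage_mem_nhds hU
    obtain ⟨δ, hδpos, hball⟩ := Metric.mem_nhds_iff.mp hUx
    obtain ⟨n0, hn0⟩ := exists_pow_lt_of_lt_one (half_pos hδpos) (by norm_num : (1/2:ℝ) < 1)
    set n := n0 + 1 with hn
    have hLn : cantorL ωlim n < δ/2 := by
      calc cantorL ωlim n ≤ (1/2:ℝ)^n := cantorL_le hωlim n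
        _ ≤ (1/2:ℝ)^n0 := pow_le_pow_of_le_one (by norm_num) (by norm_num) (by omega)
        _ < δ/2 := hn0
    have hx_stage : x ∈ cantorStage ωlim n :=
      Set.mem_iInter₂.mp hxE n (Set.mem_Ici.mpr (by omega))
    obtain ⟨ε, hxε⟩ := Set.mem_iUnion.mp hx_stage
    have ha := tendsto_cantorA hconv n ε
    have hev : ∀ᶠ m in atTop,
        dist (cantorA (ω m) n ε) (cantorA ωlim n ε) < δ/2 := by
      have := ha (Metric.ball_mem_nhds _ (half_pos hδpos))
      simpa [Metric.mem_ball] using this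
    obtain ⟨M0, hM0⟩ := eventually_atTop.mp hev
    set m := max M0 (M + 1) with hm
    have hmgt : m > M := lt_of_lt_of_le (Nat.lt_succ_self M) (le_max_right _ _)
    set p := cantorA (ω m) n ε with hp
    have hpE : p ∈ genCantorSet (ω m) := cantorA_mem_genCantorSet (hω m) ε n
    have hd1 : dist p (cantorA ωlim n ε) < δ/2 := hM0 m (le_max_left _ _)
    have hd2 : |cantorA ωlim n ε - x| ≤ cantorL ωlim n := by
      rw [abs_le]
      obtain ⟨hx1, hx2⟩ := hxε
      constructor <;> linarith [cantorL_pos hωlim n]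
    have hdist : dist p x < δ := by
      rw [Real.dist_eq] at hd1 ⊢
      calc |p - x| ≤ |p - cantorA ωlim n ε| + |cantorA ωlim n ε - x| := abs_sub_le _ _ _
        _ < δ/2 + δ/2 := by linarith
        _ = δ := by ring
    have hgpU : g p ∈ U := hball (Metric.mem_ball.mpr hdist)
    exact hM m hmgt hgpU ⟨p, hpE, rfl⟩
  · intro hz
    by_cases hz01 : z ∈ g '' Set.Icc (0:ℝ) 1
    · obtain ⟨x, hx01, rfl⟩ := hz01
      have hxE : x ∉ genCantorSet ωlim := fun h => hz ⟨x, h, rfl⟩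
      have hstage : ∃ N, 1 ≤ N ∧ x ∉ cantorStage ωlim N := by
        by_contra hcon
        push_neg at hcon
        exact hxE (Set.mem_iInter₂.mpr fun n hn => hcon n hn)
      obtain ⟨N, hN1, hxN⟩ := hstage
      classical
      set toF : ((Finset.Icc 1 N : Finset ℕ) → Bool) → (ℕ → Bool) :=
        fun f k => if h : k ∈ Finset.Icc 1 N then f ⟨k, h⟩ else false with htoF
      set aF : ((Finset.Icc 1 N : Finset ℕ) → Bool) → ℝ :=
        fun f => cantorA ωlim N (toF f) with haF
      set L := cantorL ωlim N with hLdef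
      have hLpos : 0 < L := cantorL_pos hωlim N
      have hgap : ∀ f, x < aF f ∨ aF f + L < x := by
        intro f
        have hni : x ∉ Set.Icc (aF f) (aF f + L) := fun hx =>
          hxN (Set.mem_iUnion.mpr ⟨toF f, hx⟩)
        rcases lt_or_ge x (aF f) with h | h
        · exact Or.inl h
        · right
          by_contra hcon
          push_neg at hcon
          exact hni ⟨h, hcon⟩
      set d : ((Finset.Icc 1 N : Finset ℕ) → Bool) → ℝ :=
        fun f => if x < aF f then aF f - x else x - (aF f + L) with hd
      have hdpos : ∀ f, 0 < d f := by
        intro f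
        rw [hd]
        dsimp only
        split_ifs with h'
        · linarith
        · rcases hgap f with h | h
          · exact absurd h h'
          · linarith
      have hne : (Finset.univ : Finset ((Finset.Icc 1 N : Finset ℕ) → Bool)).Nonempty :=
        Finset.univ_nonempty
      set δ := (Finset.univ.inf' hne d) / 2 with hδdef
      have hδpos : 0 < δ := by
        apply half_pos
        rw [Finset.lt_inf'_iff]
        exact fun f _ => hdpos f
      have hδle : ∀ f, 2*δ ≤ d f := by
        intro f
        have h := Finset.inf'_le d (Finset.mem_univ f)
        rw [hδdef]
        linarith
      have hclaim : ∀ f, ∀ᶠ m in atTop,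
          (x + δ < cantorA (ω m) N (toF f) ∨
           cantorA (ω m) N (toF f) + cantorL (ω m) N < x - δ) := by
        intro f
        rcases hgap f with h | h
        · have hdf : d f = aF f - x := by rw [hd]; exact if_pos h
          have h2 := hδle f
          have hten := tendsto_cantorA hconv N (toF f)
          have hev : ∀ᶠ m in atTop, x + δ < cantorA (ω m) N (toF f) :=
            hten.eventually (eventually_gt_nhds (by rw [hdf] at h2; linarith))
          exact hev.mono fun m hm => Or.inl hm
        · have hnotlt : ¬ x < aF f := not_lt.mpr (by linarith)
          have hdf : d f = x - (aF f + L) := by rw [hd]; exact if_neg hnotlt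
          have h2 := hδle f
          have hten := (tendsto_cantorA hconv N (toF f)).add (tendsto_cantorL hconv N)
          have hev : ∀ᶠ m in atTop,
              cantorA (ω m) N (toF f) + cantorL (ω m) N < x - δ :=
            hten.eventually (eventually_lt_nhds (by rw [hdf] at h2; linarith))
          exact hev.mono fun m hm => Or.inr hm
      have hall := eventually_all.mpr hclaim
      obtain ⟨M, hMev⟩ := eventually_atTop.mp hall
      refine ⟨OnePoint.some '' Metric.ball (x:ℂ) δ, ?_, M, ?_⟩
      · exact (OnePoint.isOpenEmbedding_coe.isOpenMap _ Metric.isOpen_ball).mem_nhds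
          ⟨(x:ℂ), Metric.mem_ball_self hδpos, rfl⟩
      · rintro m hm u ⟨w, hw, rfl⟩
        simp only [cantorComplement, Set.mem_compl_iff]
        intro hus
        obtain ⟨y, hyE, hy⟩ := hus
        have hwy : w = (y:ℂ) := (OnePoint.coe_injective hy).symm
        have hdyx : |y - x| < δ := by
          rw [hwy] at hw
          have hb := Metric.mem_ball.mp hw
          rw [real_dist_complex, Real.dist_eq] at hb
          exact hb
        have hyN : y ∈ cantorStage (ω m) N :=
          Set.mem_iInter₂.mp hyE N (Set.mem_Ici.mpr hN1)
        obtain ⟨ε, hyε⟩ := Set.mem_iUnion.mp hyN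
        set f₀ : (Finset.Icc 1 N : Finset ℕ) → Bool := fun k => ε k.1 with hf₀
        have heq : cantorA (ω m) N (toF f₀) = cantorA (ω m) N ε := by
          apply cantorA_congr
          intro k hk
          simp only [htoF, hf₀]
          rw [dif_pos hk]
        have habs := abs_lt.mp hdyx
        rcases hMev m (le_of_lt hm) f₀ with h | h
        · rw [heq] at h
          have hy1 := hyε.1
          linarith
        · rw [heq] at h
          have hy2 := hyε.2
          linarith
    · refine ⟨(g '' Set.Icc 0 1)ᶜ, ?_, 0, ?_⟩
      · exact ((isCompact_Icc.image sphere_map_continuous).isClosed.isOpen_compl).mem_nhds hz01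
      · intro m _
        exact Set.compl_subset_compl.mpr
          (fun u hu => by obtain ⟨y, hyE, rfl⟩ := hu
                          exact ⟨y, genCantorSet_subset_Icc (hω m) hyE, rfl⟩)
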